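/- Let x₁,…,xₙ ∈ ℝᵈ satisfy the ℓ₂² triangle inequalities. Let p be a probability distribution on pairs {(k,l) : k<l}, and let P = Σ_{k<l} p_{kl} (xₖ−xₗ)(xₖ−xₗ)ᵀ (a symmetric positive semidefinite d×d matrix). Then the map xᵢ ↦ P^{1/2} xᵢ is a contraction from the ℓ₂² metric into ℓ₂: for all i,j, ‖P^{1/2}(xᵢ−xⱼ)‖ ≤ ‖xᵢ−xⱼ‖². -/

import Mathlib

open Matrix

open scoped ComplexOrder in
/-- The square root of a positive semidefinite matrix, as defined in the older Mathlib
(`Matrix.PosSemidef.sqrt`, since removed). -/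
noncomputable def Matrix.PosSemidef.sqrt {n 𝕜 : Type*} [Fintype n] [DecidableEq n] [RCLike 𝕜]
    {A : Matrix n n 𝕜} (hA : A.PosSemidef) : Matrix n n 𝕜 :=
  (hA.1.eigenvectorUnitary : Matrix n n 𝕜) *
    diagonal (((↑) : ℝ → 𝕜) ∘ Real.sqrt ∘ hA.1.eigenvalues) *
    (star hA.1.eigenvectorUnitary : Matrix n n 𝕜)

lemma psdSqrt_herm {m : Type*} [Fintype m] [DecidableEq m] {A : Matrix m m ℝ}
    (hA : A.PosSemidef) : hA.sqrt.IsHermitian := by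
  unfold Matrix.PosSemidef.sqrt IsHermitian
  rw [conjTranspose_mul, conjTranspose_mul, star_eq_conjTranspose, conjTranspose_conjTranspose,
    diagonal_conjTranspose]
  simp [Matrix.mul_assoc]
lemma psdSqrt_mul_self {m : Type*} [Fintype m] [DecidableEq m] {A : Matrix m m ℝ}
    (hA : A.PosSemidef) : hA.sqrt * hA.sqrt = A := by
  unfold Matrix.PosSemidef.sqrt
  conv_rhs => rw [hA.1.spectral_theorem, Unitary.conjStarAlgAut_apply]
  have hU : (star hA.1.eigenvectorUnitary : Matrix m m ℝ) * (hA.1.eigenvectorUnitary : Matrix m m ℝ) = 1 :=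
    Unitary.coe_star_mul_self _
  simp only [Matrix.mul_assoc]
  rw [← Matrix.mul_assoc (star _ : Matrix m m ℝ), hU, Matrix.one_mul, ← Matrix.mul_assoc (diagonal _), diagonal_mul_diagonal]
  congr 2
  congr 1
  funext k
  simp [Real.mul_self_sqrt (hA.eigenvalues_nonneg k)]

/-- Contraction lemma: with `P = Σ_{k<l} p_{kl} (xₖ−xₗ)(xₖ−xₗ)ᵀ` for a probability
distribution `p` on pairs, the map `xᵢ ↦ P^{1/2} xᵢ` is a contraction of ℓ₂² into ℓ₂. -/
theorem stmt2 (n d : ℕ) (x : Fin n → Fin d → ℝ)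
    (htri : ∀ i j k, (x i - x j) ⬝ᵥ (x i - x j) + (x j - x k) ⬝ᵥ (x j - x k) ≥
      (x i - x k) ⬝ᵥ (x i - x k))
    (p : Fin n → Fin n → ℝ) (hp : ∀ k l, 0 ≤ p k l)
    (hpsum : ∑ q : {q : Fin n × Fin n // q.1 < q.2}, p q.1.1 q.1.2 = 1)
    (P : Matrix (Fin d) (Fin d) ℝ)
    (hPdef : P = ∑ q : {q : Fin n × Fin n // q.1 < q.2},
      p q.1.1 q.1.2 • vecMulVec (x q.1.1 - x q.1.2) (x q.1.1 - x q.1.2))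
    (hP : P.PosSemidef) :
    ∀ i j, Real.sqrt (hP.sqrt.mulVec (x i - x j) ⬝ᵥ hP.sqrt.mulVec (x i - x j)) ≤
      (x i - x j) ⬝ᵥ (x i - x j) := by
  intro i j
  set v : Fin d → ℝ := x i - x j with hv
  have hdnn : (0:ℝ) ≤ v ⬝ᵥ v := Finset.sum_nonneg fun t _ => mul_self_nonneg _
  have hdsymm : ∀ a b : Fin n, (x a - x b) ⬝ᵥ (x a - x b) = (x b - x a) ⬝ᵥ (x b - x a) := by
    intro a b
    have h1 : x a - x b = -(x b - x a) := by abel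
    rw [h1, neg_dotProduct, dotProduct_neg, neg_neg]
  -- key inequality : (⟨x k − x l, v⟩)² ≤ (v ⬝ᵥ v)²
  have key : ∀ k l : Fin n, ((x k - x l) ⬝ᵥ v)^2 ≤ (v ⬝ᵥ v)^2 := by
    intro k l
    have expand : ∀ a b c e : Fin n,
        (x a - x b) ⬝ᵥ (x c - x e)
          = (x a ⬝ᵥ x c) - (x a ⬝ᵥ x e) - (x b ⬝ᵥ x c) + (x b ⬝ᵥ x e) := by
      intro a b c e
      rw [sub_dotProduct, dotProduct_sub, dotProduct_sub]
      ring
    have h2 : 2 * ((x k - x l) ⬝ᵥ v)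
        = (x i - x l) ⬝ᵥ (x i - x l) + (x j - x k) ⬝ᵥ (x j - x k)
          - (x i - x k) ⬝ᵥ (x i - x k) - (x j - x l) ⬝ᵥ (x j - x l) := by
      rw [hv]
      rw [expand k l i j, expand i l i l, expand j k j k, expand i k i k, expand j l j l]
      have c1 := dotProduct_comm (x i) (x k)
      have c2 := dotProduct_comm (x i) (x l)
      have c3 := dotProduct_comm (x j) (x k)
      have c4 := dotProduct_comm (x j) (x l)
      linarith
    have t1 := htri i j l
    have t2 := htri j i k
    have t3 := htri i j k
    have t4 := htri j i l
    have hji : (x j - x i) ⬝ᵥ (x j - x i) = v ⬝ᵥ v := by rw [hv, ← hdsymm]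
    rw [← hv] at t1 t3
    rw [hji] at t2 t4
    have hub : (x k - x l) ⬝ᵥ v ≤ v ⬝ᵥ v := by linarith
    have hlb : -(v ⬝ᵥ v) ≤ (x k - x l) ⬝ᵥ v := by linarith
    exact sq_le_sq' hlb hub
  -- quadratic form value
  have hsymm : hP.sqrtᵀ = hP.sqrt := by
    ext a b
    have := congrFun (congrFun (psdSqrt_herm hP) a) b
    simpa [conjTranspose_apply] using this
  have hquad : hP.sqrt.mulVec v ⬝ᵥ hP.sqrt.mulVec v = v ⬝ᵥ P.mulVec v := by
    conv_rhs => rw [← psdSqrt_mul_self hP, ← mulVec_mulVec, dotProduct_mulVec,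
      ← mulVec_transpose, hsymm]
  have aux : ∀ w u : Fin d → ℝ, u ⬝ᵥ (vecMulVec w w).mulVec u = (w ⬝ᵥ u)^2 := by
    intro w u
    have h1 : (w ⬝ᵥ u)^2 = ∑ a, ∑ b, (w a * u a) * (w b * u b) := by
      rw [sq, dotProduct, Finset.sum_mul_sum]
    rw [h1]
    simp only [mulVec, dotProduct, vecMulVec_apply, Finset.mul_sum]
    exact Finset.sum_congr rfl fun a _ => Finset.sum_congr rfl fun b _ => by ring
  have hsum : ∀ (M : {q : Fin n × Fin n // q.1 < q.2} → Matrix (Fin d) (Fin d) ℝ),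
      v ⬝ᵥ (∑ q, M q).mulVec v = ∑ q, v ⬝ᵥ (M q).mulVec v := by
    intro M
    classical
    induction (Finset.univ : Finset {q : Fin n × Fin n // q.1 < q.2}) using
        Finset.induction_on with
    | empty => simp
    | insert _ _ h ih => simp [Finset.sum_insert h, add_mulVec, dotProduct_add, ih]
  have hform : v ⬝ᵥ P.mulVec v
      = ∑ q : {q : Fin n × Fin n // q.1 < q.2},
          p q.1.1 q.1.2 * ((x q.1.1 - x q.1.2) ⬝ᵥ v)^2 := by
    rw [hPdef, hsum]
    refine Finset.sum_congr rfl fun q _ => ?_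
    rw [smul_mulVec, dotProduct_smul, smul_eq_mul, aux]
  have hle : v ⬝ᵥ P.mulVec v ≤ (v ⬝ᵥ v)^2 := by
    rw [hform]
    calc ∑ q : {q : Fin n × Fin n // q.1 < q.2},
          p q.1.1 q.1.2 * ((x q.1.1 - x q.1.2) ⬝ᵥ v)^2
        ≤ ∑ q : {q : Fin n × Fin n // q.1 < q.2}, p q.1.1 q.1.2 * (v ⬝ᵥ v)^2 :=
          Finset.sum_le_sum fun q _ =>
            mul_le_mul_of_nonneg_left (key q.1.1 q.1.2) (hp q.1.1 q.1.2)
      _ = (v ⬝ᵥ v)^2 := by rw [← Finset.sum_mul, hpsum, one_mul]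
  calc Real.sqrt (hP.sqrt.mulVec v ⬝ᵥ hP.sqrt.mulVec v)
      ≤ Real.sqrt ((v ⬝ᵥ v)^2) := Real.sqrt_le_sqrt (by rw [hquad]; exact hle)
    _ = v ⬝ᵥ v := Real.sqrt_sq hdnn
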